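/- The average posterior circular variance for Bayesian phase estimation with a flat prior, coherent probe of amplitude α > 0 and heterodyne detection equals (1 − e^{−α²})/(2α²); explicitly, e^{−α²} ∫₀^∞ |β| e^{−|β|²} ₀F₁(2; α²|β|²) d|β| = (1 − e^{−α²})/(2α²). -/

import Mathlib

open Real MeasureTheory

/-- The confluent hypergeometric limit function `₀F₁(2; z) = Σ_{k≥0} z^k/((k+1)! k!)`. -/
noncomputable def hyp0F1two (z : ℝ) : ℝ :=
  ∑' k : ℕ, z ^ k / ((Nat.factorial (k + 1) : ℝ) * (Nat.factorial k : ℝ))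

lemma integrable_exp_mul_pow (k : ℕ) :
    IntegrableOn (fun u : ℝ => Real.exp (-u) * u ^ k) (Set.Ioi 0) := by
  have := Real.GammaIntegral_convergent (s := (k : ℝ) + 1) (by positivity)
  refine this.congr_fun ?_ measurableSet_Ioi
  intro x hx
  simp [add_sub_cancel_right, Real.rpow_natCast]

lemma integral_exp_mul_pow (k : ℕ) :
    ∫ u in Set.Ioi (0:ℝ), Real.exp (-u) * u ^ k = (Nat.factorial k : ℝ) := by
  have h1 := Real.Gamma_eq_integral (s := (k : ℝ) + 1) (by positivity)
  rw [Real.Gamma_nat_eq_factorial k] at h1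
  rw [h1]
  refine setIntegral_congr_fun measurableSet_Ioi fun x hx => ?_
  simp [add_sub_cancel_right, Real.rpow_natCast]

lemma summable_aux (x : ℝ) (hx : 0 ≤ x) :
    Summable (fun k : ℕ => x ^ k / (Nat.factorial (k+1) : ℝ)) := by
  refine Summable.of_nonneg_of_le (fun k => by positivity) (fun k => ?_)
    (Real.summable_pow_div_factorial x)
  gcongr
  exact Nat.le_succ k

lemma tsum_aux (x : ℝ) (hx : 0 < x) :
    ∑' k : ℕ, x ^ k / (Nat.factorial (k+1) : ℝ) = (Real.exp x - 1) / x := by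
  have hexp : Real.exp x = ∑' n : ℕ, x ^ n / (Nat.factorial n : ℝ) := by
    rw [Real.exp_eq_exp_ℝ, NormedSpace.exp_eq_tsum_div]
  have h0 : (∑' n : ℕ, x ^ n / (Nat.factorial n : ℝ)) =
      1 + ∑' k : ℕ, x ^ (k+1) / (Nat.factorial (k+1) : ℝ) := by
    rw [(Real.summable_pow_div_factorial x).tsum_eq_zero_add]
    simp
  have h1 : ∑' k : ℕ, x ^ (k+1) / (Nat.factorial (k+1) : ℝ) =
      x * ∑' k : ℕ, x ^ k / (Nat.factorial (k+1) : ℝ) := by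
    rw [← tsum_mul_left]
    congr 1; ext k; ring
  rw [hexp, h0, h1]
  field_simp
  ring

lemma integral_exp_hyp (x : ℝ) (hx : 0 < x) :
    ∫ u in Set.Ioi (0:ℝ), Real.exp (-u) * hyp0F1two (x * u) = (Real.exp x - 1) / x := by
  set f : ℕ → ℝ → ℝ := fun k u =>
    Real.exp (-u) * ((x * u) ^ k / ((Nat.factorial (k + 1) : ℝ) * (Nat.factorial k : ℝ)))
    with hf
  have hfeq : ∀ k, ∀ u : ℝ, f k u =
      (x ^ k / ((Nat.factorial (k + 1) : ℝ) * (Nat.factorial k : ℝ))) *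
        (Real.exp (-u) * u ^ k) := by
    intro k u; simp only [hf, mul_pow]; ring
  have hint : ∀ k, IntegrableOn (f k) (Set.Ioi 0) := by
    intro k
    have h := (integrable_exp_mul_pow k).const_mul
      (x ^ k / ((Nat.factorial (k + 1) : ℝ) * (Nat.factorial k : ℝ)))
    exact h.congr (ae_of_all _ fun u => (hfeq k u).symm)
  have hval : ∀ k, ∫ u in Set.Ioi (0:ℝ), f k u = x ^ k / (Nat.factorial (k+1) : ℝ) := by
    intro k
    calc ∫ u in Set.Ioi (0:ℝ), f k u
        = ∫ u in Set.Ioi (0:ℝ),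
            (x ^ k / ((Nat.factorial (k + 1) : ℝ) * (Nat.factorial k : ℝ))) *
              (Real.exp (-u) * u ^ k) := by
          exact setIntegral_congr_fun measurableSet_Ioi fun u hu => hfeq k u
      _ = (x ^ k / ((Nat.factorial (k + 1) : ℝ) * (Nat.factorial k : ℝ))) *
              ∫ u in Set.Ioi (0:ℝ), Real.exp (-u) * u ^ k := integral_const_mul _ _
      _ = x ^ k / (Nat.factorial (k+1) : ℝ) := by
          rw [integral_exp_mul_pow]
          have h1 : (Nat.factorial k : ℝ) ≠ 0 := by positivity
          field_simp
  have hnorm : ∀ k, ∫⁻ u in Set.Ioi (0:ℝ), ‖f k u‖ₑ =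
      ENNReal.ofReal (x ^ k / (Nat.factorial (k+1) : ℝ)) := by
    intro k
    rw [← MeasureTheory.ofReal_integral_norm_eq_lintegral_enorm (hint k)]
    congr 1
    rw [← hval k]
    refine setIntegral_congr_fun measurableSet_Ioi fun u hu => ?_
    have hu' : (0:ℝ) < u := hu
    have h0 : 0 ≤ f k u := by
      have hxu : (0:ℝ) ≤ x * u := (mul_pos hx hu').le
      exact mul_nonneg (Real.exp_pos _).le
        (div_nonneg (pow_nonneg hxu _) (by positivity))
    exact Real.norm_of_nonneg h0
  have hswap := MeasureTheory.integral_tsum (μ := volume.restrict (Set.Ioi (0:ℝ))) (f := f)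
      (fun k => (hint k).aestronglyMeasurable) ?_
  · have hpt : ∀ u : ℝ, Real.exp (-u) * hyp0F1two (x * u) = ∑' k, f k u := by
      intro u
      rw [hyp0F1two, ← tsum_mul_left]
    calc ∫ u in Set.Ioi (0:ℝ), Real.exp (-u) * hyp0F1two (x * u)
        = ∫ u in Set.Ioi (0:ℝ), ∑' k, f k u :=
          setIntegral_congr_fun measurableSet_Ioi fun u _ => hpt u
      _ = ∑' k, ∫ u in Set.Ioi (0:ℝ), f k u := hswap
      _ = ∑' k : ℕ, x ^ k / (Nat.factorial (k+1) : ℝ) := by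
          exact tsum_congr hval
      _ = (Real.exp x - 1) / x := tsum_aux x hx
  · rw [funext hnorm]
    rw [← ENNReal.ofReal_tsum_of_nonneg (fun k => by positivity) (summable_aux x hx.le)]
    exact ENNReal.ofReal_ne_top

lemma integral_subst_sq (g : ℝ → ℝ) :
    ∫ u in Set.Ioi (0:ℝ), g u = ∫ b in Set.Ioi (0:ℝ), (2 * b) * g (b ^ 2) := by
  have himg : (fun b : ℝ => b ^ 2) '' Set.Ioi 0 = Set.Ioi 0 := by
    ext y
    constructor
    · rintro ⟨b, hb, rfl⟩; exact pow_pos (Set.mem_Ioi.mp hb) 2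
    · intro hy
      exact ⟨Real.sqrt y, Real.sqrt_pos.2 hy, Real.sq_sqrt (le_of_lt hy)⟩
  have hderiv : ∀ b ∈ Set.Ioi (0:ℝ),
      HasDerivWithinAt (fun b : ℝ => b ^ 2) (2 * b) (Set.Ioi 0) b := by
    intro b _
    simpa using (hasDerivAt_pow 2 b).hasDerivWithinAt
  have hinj : Set.InjOn (fun b : ℝ => b ^ 2) (Set.Ioi 0) := by
    intro a ha b hb h
    simp only at h
    nlinarith [Set.mem_Ioi.mp ha, Set.mem_Ioi.mp hb]
  calc ∫ u in Set.Ioi (0:ℝ), g u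
      = ∫ u in (fun b : ℝ => b ^ 2) '' Set.Ioi 0, g u := by rw [himg]
    _ = ∫ b in Set.Ioi (0:ℝ), |2 * b| • g (b ^ 2) :=
        integral_image_eq_integral_abs_deriv_smul measurableSet_Ioi hderiv hinj g
    _ = ∫ b in Set.Ioi (0:ℝ), (2 * b) * g (b ^ 2) := by
        refine setIntegral_congr_fun measurableSet_Ioi fun b hb => ?_
        have hb' : (0:ℝ) < b := hb
        rw [smul_eq_mul, abs_of_pos (by linarith)]

/-- Average posterior circular variance for Bayesian phase estimation with a flat prior,
coherent probe of amplitude `α > 0`, and heterodyne detection: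
`e^{−α²}∫₀^∞ b e^{−b²} ₀F₁(2; α²b²) db = (1 − e^{−α²})/(2α²)`. -/
theorem average_phase_variance_coherent_heterodyne (α : ℝ) (hα : 0 < α) :
    Real.exp (-α ^ 2) *
        (∫ b in Set.Ioi (0 : ℝ), b * Real.exp (-b ^ 2) * hyp0F1two (α ^ 2 * b ^ 2)) =
      (1 - Real.exp (-α ^ 2)) / (2 * α ^ 2) := by
  set x : ℝ := α ^ 2 with hxdef
  have hx : 0 < x := by positivity
  have hsub := integral_subst_sq (fun u => Real.exp (-u) * hyp0F1two (x * u))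
  rw [integral_exp_hyp x hx] at hsub
  have h2 : (∫ b in Set.Ioi (0:ℝ), (2*b) * (Real.exp (-b^2) * hyp0F1two (x * b^2)))
      = 2 * ∫ b in Set.Ioi (0:ℝ), b * Real.exp (-b^2) * hyp0F1two (x * b^2) := by
    rw [← integral_const_mul]
    refine setIntegral_congr_fun measurableSet_Ioi fun b _ => ?_
    ring
  rw [h2] at hsub
  have hI : ∫ b in Set.Ioi (0:ℝ), b * Real.exp (-b^2) * hyp0F1two (x * b^2)
      = (Real.exp x - 1) / (2 * x) := by
    field_simp at hsub ⊢
    linarith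
  rw [hI]
  have hne : Real.exp x ≠ 0 := (Real.exp_pos x).ne'
  rw [Real.exp_neg]
  field_simp
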